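/- Let A, B be finite subsets of P^r, each linearly independent, with q ∈ ⟨A⟩ ∩ ⟨B⟩, where A and B are of minimal cardinality among sets whose span contains q. If A ∪ B is linearly independent, then A = B. -/

import Mathlib

open MvPolynomial

noncomputable section

namespace Dep

variable (K : Type) [Field K]

/-- `PS K n` is the projective space of lines in `K^n`, i.e. `ℙ^{n-1}`. -/
abbrev PS (n : ℕ) := Projectivization K (Fin n → K)

/-- The projective zero locus of a (homogeneous) polynomial. -/
def zeros {n : ℕ} (f : MvPolynomial (Fin n) K) : Set (PS K n) :=
  {p | ∀ v : Fin n → K, ∀ hv : v ≠ 0, Projectivization.mk K v hv = p → eval v f = 0}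

/-- Zariski-closed subsets of projective space: common zero loci of families of
homogeneous polynomials. -/
def IsZClosed {n : ℕ} (X : Set (PS K n)) : Prop :=
  ∃ F : Set (MvPolynomial (Fin n) K), (∀ f ∈ F, ∃ d, f.IsHomogeneous d) ∧
    X = ⋂ f ∈ F, zeros K f

/-- Irreducible closed subsets. -/
def IsIrredClosed {n : ℕ} (X : Set (PS K n)) : Prop :=
  X.Nonempty ∧ IsZClosed K X ∧
    ∀ C₁ C₂ : Set (PS K n), IsZClosed K C₁ → IsZClosed K C₂ → X ⊆ C₁ ∪ C₂ →
      X ⊆ C₁ ∨ X ⊆ C₂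

/-- Zariski closure. -/
def zclosure {n : ℕ} (S : Set (PS K n)) : Set (PS K n) :=
  ⋂₀ {C | IsZClosed K C ∧ S ⊆ C}

/-- Dimension of a subset of projective space: the supremum of lengths of strict chains
of irreducible closed subsets contained in it. -/
def zdim {n : ℕ} (X : Set (PS K n)) : ℕ :=
  sSup {m | ∃ C : Fin (m + 1) → Set (PS K n),
    (∀ i, IsIrredClosed K (C i) ∧ C i ⊆ X) ∧
    ∀ i j : Fin (m + 1), i < j → C i ⊂ C j}

/-- The linear subspace of `K^n` spanned by (representatives of) a set of projective points. -/
def projSpan {n : ℕ} (S : Set (PS K n)) : Submodule K (Fin n → K) :=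
  Submodule.span K (Projectivization.rep '' S)

/-- The projective linear span of a set of projective points, as a set of points. -/
def spanSet {n : ℕ} (S : Set (PS K n)) : Set (PS K n) :=
  {p | p.rep ∈ projSpan K S}

/-- Non-degenerate: not contained in any hyperplane, i.e. the points span everything. -/
def Nondeg {n : ℕ} (X : Set (PS K n)) : Prop := projSpan K X = ⊤

/-- An integral non-degenerate projective variety in `ℙ^{n-1}`. -/
def IsVariety {n : ℕ} (X : Set (PS K n)) : Prop :=
  IsIrredClosed K X ∧ Nondeg K X

/-- A finite set of projective points is linearly independent if its span has dimension
(as a vector subspace) equal to its cardinality. -/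
def LinIndepSet {n : ℕ} (S : Finset (PS K n)) : Prop :=
  Module.finrank K (projSpan K (S : Set (PS K n))) = S.card

/-- `ρ'(X)`: the maximal `t > 0` such that every subset of `X` with at most `t` points is
linearly independent. -/
def rho' {n : ℕ} (X : Set (PS K n)) : ℕ :=
  sSup {t | 0 < t ∧ ∀ S : Finset (PS K n), ↑S ⊆ X → S.card ≤ t → LinIndepSet K S}

/- ### Zero-dimensional subschemes, via homogeneous ideals -/

/-- A homogeneous ideal. -/
def IsHomogIdeal {n : ℕ} (I : Ideal (MvPolynomial (Fin n) K)) : Prop :=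
  ∀ f ∈ I, ∀ d : ℕ, homogeneousComponent d f ∈ I

/-- The homogeneous vanishing ideal of a set of projective points. -/
def hVanish {n : ℕ} (S : Set (PS K n)) : Ideal (MvPolynomial (Fin n) K) :=
  Ideal.span {f | (∃ d, f.IsHomogeneous d) ∧ S ⊆ zeros K f}

/-- The Hilbert function of (the subscheme defined by) a homogeneous ideal: the dimension of
the degree-`m` graded piece of the quotient ring. -/
def hilb {n : ℕ} (I : Ideal (MvPolynomial (Fin n) K)) (m : ℕ) : ℕ :=
  Module.finrank K (Submodule.map (Ideal.Quotient.mkₐ K I).toLinearMap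
    (homogeneousSubmodule (Fin n) K m))

/-- The subscheme defined by `I` is zero-dimensional of degree `d`: the Hilbert function is
eventually constant, equal to `d`. -/
def SchemeDeg {n : ℕ} (I : Ideal (MvPolynomial (Fin n) K)) (d : ℕ) : Prop :=
  ∃ N, ∀ m ≥ N, hilb K I m = d

/-- The subscheme defined by `I` lies in `X`. -/
def SubschemeOf {n : ℕ} (X : Set (PS K n)) (I : Ideal (MvPolynomial (Fin n) K)) : Prop :=
  hVanish K X ≤ I

/-- The degree-one part of a homogeneous ideal, i.e. the linear forms vanishing on the
corresponding subscheme. -/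
def degOnePart {n : ℕ} (I : Ideal (MvPolynomial (Fin n) K)) :
    Submodule K (MvPolynomial (Fin n) K) :=
  homogeneousSubmodule (Fin n) K 1 ⊓ I.restrictScalars K

/-- A zero-dimensional subscheme of degree `d` of `ℙ^{n-1}` is linearly independent iff its
projective span has dimension `d - 1`, i.e. exactly `n - d` independent linear forms vanish
on it. -/
def SchemeLinIndep {n : ℕ} (I : Ideal (MvPolynomial (Fin n) K)) (d : ℕ) : Prop :=
  Module.finrank K (degOnePart K I) = n - d

/-- The projective linear span of the subscheme defined by `I`: the common zero locus of the
linear forms in `I`. -/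
def schemeSpan {n : ℕ} (I : Ideal (MvPolynomial (Fin n) K)) : Set (PS K n) :=
  {p | ∀ f ∈ I, f.IsHomogeneous 1 → p ∈ zeros K f}

/-- The set-theoretic zero locus of an ideal. -/
def idealZeros {n : ℕ} (I : Ideal (MvPolynomial (Fin n) K)) : Set (PS K n) :=
  {p | ∀ f ∈ I, ∀ m : ℕ, p ∈ zeros K (homogeneousComponent m f)}

/-- The subscheme defined by `I` is reduced: `I` is the full vanishing ideal of its zero set. -/
def IsReducedScheme {n : ℕ} (I : Ideal (MvPolynomial (Fin n) K)) : Prop :=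
  I = hVanish K (idealZeros K I)

/- ### Smoothability: flat limits of reduced finite subsets -/

/-- Specialisation of a one-parameter family of ideals at `c : K`. -/
def fiberAt {n : ℕ} (J : Ideal (MvPolynomial (Fin n) (Polynomial K))) (c : K) :
    Ideal (MvPolynomial (Fin n) K) :=
  Ideal.map (MvPolynomial.map (Polynomial.evalRingHom c)) J

/-- `Z` (given by `I`, of degree `d`) is smoothable in `X`: either `Z` is already a reduced set
of `d` points of `X`, or `Z` is the flat limit at `0` of a one-parameter family whose general
member is a reduced set of `d` points of `X`.  Flatness over `K[t]` is encoded as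
torsion-freeness of the quotient. -/
def SmoothableIn {n : ℕ} (X : Set (PS K n)) (I : Ideal (MvPolynomial (Fin n) K)) (d : ℕ) :
    Prop :=
  (∃ S : Finset (PS K n), ↑S ⊆ X ∧ S.card = d ∧ I = hVanish K (S : Set (PS K n))) ∨
  ∃ J : Ideal (MvPolynomial (Fin n) (Polynomial K)),
    (∀ f ∈ J, ∀ m : ℕ, homogeneousComponent m f ∈ J) ∧
    (∀ p : Polynomial K, p ≠ 0 → ∀ f, MvPolynomial.C p * f ∈ J → f ∈ J) ∧
    fiberAt K J 0 = I ∧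
    ∃ E : Set K, E.Finite ∧ ∀ c : K, c ∉ E →
      ∃ S : Finset (PS K n), ↑S ⊆ X ∧ S.card = d ∧
        fiberAt K J c = hVanish K (S : Set (PS K n))

/-- `ρ''(X)`: the maximal `t > 0` such that every zero-dimensional subscheme of `X` of degree
at most `t` which is smoothable in `X` is linearly independent. -/
def rho'' {n : ℕ} (X : Set (PS K n)) : ℕ :=
  sSup {t | 0 < t ∧ ∀ (I : Ideal (MvPolynomial (Fin n) K)) (d : ℕ),
    IsHomogIdeal K I → SubschemeOf K X I → SchemeDeg K I d → SmoothableIn K X I d →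
    d ≤ t → SchemeLinIndep K I d}

/-- `ρ(X)`: the maximal `t > 0` such that every zero-dimensional subscheme of `X` of degree
at most `t` is linearly independent. -/
def rho {n : ℕ} (X : Set (PS K n)) : ℕ :=
  sSup {t | 0 < t ∧ ∀ (I : Ideal (MvPolynomial (Fin n) K)) (d : ℕ),
    IsHomogIdeal K I → SubschemeOf K X I → SchemeDeg K I d →
    d ≤ t → SchemeLinIndep K I d}

/- ### Ranks and secant varieties -/

/-- The `X`-rank of a point `q`. -/
def Xrank {n : ℕ} (X : Set (PS K n)) (q : PS K n) : ℕ :=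
  sInf {t | 0 < t ∧ ∃ S : Finset (PS K n), ↑S ⊆ X ∧ S.card = t ∧ q ∈ spanSet K ↑S}

/-- `𝒮(X,q)`: the set of finite subsets of `X` of minimal cardinality whose span contains `q`. -/
def Sq {n : ℕ} (X : Set (PS K n)) (q : PS K n) : Set (Finset (PS K n)) :=
  {S | ↑S ⊆ X ∧ S.card = Xrank K X q ∧ q ∈ spanSet K ↑S}

/-- The `k`-th secant variety of `X`. -/
def secant {n : ℕ} (X : Set (PS K n)) (k : ℕ) : Set (PS K n) :=
  zclosure K (⋃ S ∈ {S : Finset (PS K n) | ↑S ⊆ X ∧ S.card = k}, spanSet K (S : Set (PS K n)))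

/-- The generic `X`-rank: the least `k` with `σ_k(X) = ℙ^{n-1}`. -/
def genRank {n : ℕ} (X : Set (PS K n)) : ℕ :=
  sInf {k | 0 < k ∧ secant K X k = Set.univ}

/-- The border `X`-rank of a point. -/
def borderRank {n : ℕ} (X : Set (PS K n)) (q : PS K n) : ℕ :=
  sInf {k | 0 < k ∧ q ∈ secant K X k}

/-- `X ⊆ ℙ^{m-1}` of dimension `dX` is not defective: every secant variety has the expected
dimension. -/
def NotDefective {m : ℕ} (X : Set (PS K m)) (dX : ℕ) : Prop :=
  ∀ k : ℕ, 0 < k → zdim K (secant K X k) = min (m - 1) (k * (dX + 1) - 1)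

/- ### Rational normal curves -/

/-- `X ⊆ ℙ^{n-1}` is a rational normal curve: up to a linear change of coordinates it is the
image of `ℙ^1` under the degree-`(n-1)` Veronese map. -/
def IsRNC {n : ℕ} (X : Set (PS K n)) : Prop :=
  ∃ g : (Fin n → K) ≃ₗ[K] (Fin n → K),
    X = {p | ∃ v : Fin 2 → K,
      ∃ hv : g (fun i => v 0 ^ (i : ℕ) * v 1 ^ (n - 1 - (i : ℕ))) ≠ 0,
      p = Projectivization.mk K (g (fun i => v 0 ^ (i : ℕ) * v 1 ^ (n - 1 - (i : ℕ)))) hv}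

/- ### Linear projections and linear normality -/

/-- The pull-back map on polynomials induced by a linear map `π : K^{n+1} → K^n`. -/
def pullback {n m : ℕ} (π : (Fin m → K) →ₗ[K] (Fin n → K)) :
    MvPolynomial (Fin n) K →ₐ[K] MvPolynomial (Fin m) K :=
  aeval (fun i => ∑ j : Fin m, MvPolynomial.C (π (Pi.single j 1) i) * MvPolynomial.X j)

/-- The image of a set of points under the projection induced by `π`. -/
def projImage {n m : ℕ} (π : (Fin m → K) →ₗ[K] (Fin n → K)) (Y : Set (PS K m)) :
    Set (PS K n) :=
  {q | ∃ p ∈ Y, ∃ h : π p.rep ≠ 0, q = Projectivization.mk K (π p.rep) h}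

/-- The linear projection from the point `o` (encoded by the linear map `π` with kernel the
line of `o`) restricts to an embedding of `Y`: `o ∉ Y` and `o` lies on no secant or tangent
line of `Y`, i.e. on the span of no degree-2 subscheme of `Y`. -/
def EmbedsFrom {n : ℕ} (π : (Fin (n + 1) → K) →ₗ[K] (Fin n → K)) (o : PS K (n + 1))
    (Y : Set (PS K (n + 1))) : Prop :=
  Function.Surjective π ∧
  LinearMap.ker π = Submodule.span K {o.rep} ∧ o ∉ Y ∧
  ∀ I : Ideal (MvPolynomial (Fin (n + 1)) K),
    IsHomogIdeal K I → SubschemeOf K Y I → SchemeDeg K I 2 → o ∉ schemeSpan K I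

/-- `X ⊆ ℙ^{n-1}` is linearly normal: it is not an isomorphic linear projection of a
non-degenerate variety in `ℙ^n`. -/
def LinearlyNormal {n : ℕ} (X : Set (PS K n)) : Prop :=
  ¬ ∃ (Y : Set (PS K (n + 1))) (o : PS K (n + 1))
      (π : (Fin (n + 1) → K) →ₗ[K] (Fin n → K)),
      IsVariety K Y ∧ EmbedsFrom K π o Y ∧ projImage K π Y = X

/- ### Tangent spaces and smooth points -/

/-- The (affine cone over the) embedded tangent space of `X` at `p`: the common kernel of the
differentials at `p` of all elements of the vanishing ideal of `X`. -/
def tangentSub {n : ℕ} (X : Set (PS K n)) (p : PS K n) : Submodule K (Fin n → K) :=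
  ⨅ f ∈ hVanish K X, LinearMap.ker
    (∑ j : Fin n, eval p.rep (pderiv j f) • (LinearMap.proj j : (Fin n → K) →ₗ[K] K))

/-- `p` is a smooth point of `X`. -/
def SmoothAt {n : ℕ} (X : Set (PS K n)) (p : PS K n) : Prop :=
  p ∈ X ∧ Module.finrank K (tangentSub K X p) = zdim K X + 1

/-- A smooth integral non-degenerate projective variety. -/
def SmoothVariety {n : ℕ} (X : Set (PS K n)) : Prop :=
  IsVariety K X ∧ ∀ p ∈ X, SmoothAt K X p

/-- For a linearly independent family, a vector in the spans of the images of two index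
sets lies in the span of the image of their intersection. -/
lemma span_image_inter_aux {M : Type*} [AddCommGroup M] [Module K M] {ι : Type*}
    {v : ι → M} (hv : LinearIndependent K v) (s t : Set ι) (x : M)
    (hxs : x ∈ Submodule.span K (v '' s)) (hxt : x ∈ Submodule.span K (v '' t)) :
    x ∈ Submodule.span K (v '' (s ∩ t)) := by
  have hsu : s = (s ∩ t) ∪ (s \ t) := by
    ext a; by_cases h : a ∈ t <;> simp [h]
  rw [hsu, Set.image_union, Submodule.span_union, Submodule.mem_sup] at hxs
  obtain ⟨y, hy, z, hz, rfl⟩ := hxs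
  have hyt : y ∈ Submodule.span K (v '' t) :=
    Submodule.span_mono (Set.image_mono Set.inter_subset_right) hy
  have hzt : z ∈ Submodule.span K (v '' t) := by
    have : z = y + z - y := by abel
    rw [this]; exact Submodule.sub_mem _ hxt hyt
  have hdisj := hv.disjoint_span_image (s := s \ t) (t := t) Set.disjoint_sdiff_left
  have hz0 : z = 0 := Submodule.disjoint_def.mp hdisj z hz hzt
  simpa [hz0] using hy

/-- If `A`, `B` are linearly independent finite sets of minimal cardinality
whose spans contain `q`, and `A ∪ B` is linearly independent, then `A = B`. -/
theorem statement3 (n : ℕ) [DecidableEq (PS K n)] (A B : Finset (PS K n)) (q : PS K n)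
    (hA : LinIndepSet K A) (hB : LinIndepSet K B)
    (hqA : q ∈ spanSet K (A : Set (PS K n))) (hqB : q ∈ spanSet K (B : Set (PS K n)))
    (hmin : ∀ S : Finset (PS K n), S ⊆ A ∪ B → q ∈ spanSet K (S : Set (PS K n)) →
      A.card ≤ S.card ∧ B.card ≤ S.card)
    (hAB : LinIndepSet K (A ∪ B)) : A = B := by
  classical
  -- The representatives of the points of `A ∪ B` form a linearly independent family.
  have hli : LinearIndependent K (fun x : (A ∪ B : Finset (PS K n)) =>
      Projectivization.rep (x : PS K n)) := by
    rw [linearIndependent_iff_card_eq_finrank_span]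
    have hr : Set.range (fun x : (A ∪ B : Finset (PS K n)) =>
        Projectivization.rep (x : PS K n)) =
        Projectivization.rep '' ((A ∪ B : Finset (PS K n)) : Set (PS K n)) := by
      ext w; simp
    rw [Set.finrank, hr]
    have := hAB
    unfold LinIndepSet projSpan at this
    rw [this, Fintype.card_coe]
  -- `q.rep` lies in the span of the representatives of `A ∩ B`.
  have key : Projectivization.rep q ∈ projSpan K ((A ∩ B : Finset (PS K n)) : Set (PS K n)) := by
    have himg : ∀ C : Finset (PS K n), C ⊆ A ∪ B →
        (fun x : (A ∪ B : Finset (PS K n)) => Projectivization.rep (x : PS K n)) ''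
          {x : (A ∪ B : Finset (PS K n)) | (x : PS K n) ∈ C} =
        Projectivization.rep '' (C : Set (PS K n)) := by
      intro C hC
      ext w
      constructor
      · rintro ⟨x, hx, rfl⟩; exact ⟨x, hx, rfl⟩
      · rintro ⟨p, hp, rfl⟩
        exact ⟨⟨p, by simpa using hC (by simpa using hp)⟩, by simpa using hp, rfl⟩
    have hmem := span_image_inter_aux K hli
      {x : (A ∪ B : Finset (PS K n)) | (x : PS K n) ∈ A}
      {x : (A ∪ B : Finset (PS K n)) | (x : PS K n) ∈ B}
      (Projectivization.rep q)
      (by rw [himg A Finset.subset_union_left]; exact hqA)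
      (by rw [himg B Finset.subset_union_right]; exact hqB)
    have hint : ({x : (A ∪ B : Finset (PS K n)) | (x : PS K n) ∈ A} ∩
        {x : (A ∪ B : Finset (PS K n)) | (x : PS K n) ∈ B}) =
        {x : (A ∪ B : Finset (PS K n)) | (x : PS K n) ∈ A ∩ B} := by
      ext x; simp
    rw [hint, himg (A ∩ B) (Finset.inter_subset_union)] at hmem
    exact hmem
  have hqAB : q ∈ spanSet K ((A ∩ B : Finset (PS K n)) : Set (PS K n)) := key
  obtain ⟨h1, h2⟩ := hmin (A ∩ B) Finset.inter_subset_union hqAB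
  have hAeq : A ∩ B = A :=
    Finset.eq_of_subset_of_card_le Finset.inter_subset_left h1
  have hBeq : A ∩ B = B :=
    Finset.eq_of_subset_of_card_le Finset.inter_subset_right h2
  exact hAeq ▸ hBeq

end Dep
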